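/- Let N ≥ 1 and τ > 0. Let R : ℝ → (N×N real matrices) be continuous with R(t)_{mn} ≥ 0 for all m ≠ n and all t ∈ [0,τ]; let p^eq : ℝ → ℝ^N be continuous with p^eq(t)_n > 0 and detailed balance R(t)_{nm}·p^eq(t)_m = R(t)_{mn}·p^eq(t)_n for all n, m, t ∈ [0,τ]; let p : ℝ → ℝ^N be differentiable on [0,τ] with p(t)_n > 0; and let v : ℝ → ℝ^N be continuous with p'(t) = K_{p(t)} v(t) for all t ∈ [0,τ], where (K_{p(t)} u)_n := Σ_{m≠n} R(t)_{nm} · p^eq(t)_m · Φ(p(t)_n/p^eq(t)_n, p(t)_m/p^eq(t)_m) · (u_n − u_m). Define par(n) := +1 if p(0)_n ≥ p(τ)_n and par(n) := −1 otherwise. Then ( Σ_n |p(τ)_n − p(0)_n| )² ≤ 2 · ( ∫₀^τ Σ_{(n,m) : n≠m, par(n)≠par(m)} R(t)_{mn} · p(t)_n dt ) · ( ∫₀^τ ⟨v(t), K_{p(t)} v(t)⟩ dt ). -/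

import Mathlib

/-- The logarithmic mean of two positive real numbers. -/
noncomputable def logMean (x y : ℝ) : ℝ :=
  if x = y then x else (x - y) / (Real.log x - Real.log y)

/-- The Onsager-type matrix `K_p` acting on a vector `v`:
`(K_p v)_n = Σ_{m≠n} R_{nm} p^eq_m Φ(p_n/p^eq_n, p_m/p^eq_m) (v_n − v_m)`. -/
noncomputable def Kop {N : ℕ} (R : Matrix (Fin N) (Fin N) ℝ) (peq p v : Fin N → ℝ) :
    Fin N → ℝ :=
  fun n => ∑ m ∈ Finset.univ.filter (· ≠ n),
    R n m * peq m * logMean (p n / peq n) (p m / peq m) * (v n - v m)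

lemma logMean_comm (x y : ℝ) : logMean x y = logMean y x := by
  unfold logMean
  rcases eq_or_ne x y with h | h
  · simp [h]
  · rw [if_neg h, if_neg h.symm, ← neg_div_neg_eq]; ring_nf

lemma logMean_pos {x y : ℝ} (hx : 0 < x) (hy : 0 < y) : 0 < logMean x y := by
  unfold logMean
  rcases eq_or_ne x y with h | h
  · simpa [h] using hy
  · rw [if_neg h]
    rcases lt_or_gt_of_ne h with hlt | hlt
    · apply div_pos_of_neg_of_neg <;> simp [sub_neg, Real.log_lt_log_iff hx hy, hlt, hx, hy]
    · apply div_pos <;> simp [sub_pos, Real.log_lt_log_iff hy hx, hlt, hx, hy]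

lemma key_log_ineq {r : ℝ} (hr : 1 ≤ r) : 2 * (r - 1) ≤ (r + 1) * Real.log r := by
  set f : ℝ → ℝ := fun x => (x + 1) * Real.log x - 2 * (x - 1) with hf
  have hd : ∀ x ∈ Set.Ioi (1:ℝ), HasDerivAt f (Real.log x + (x + 1) / x - 2) x := by
    intro x hx
    have hx0 : (0:ℝ) < x := lt_trans one_pos hx
    have h1 : HasDerivAt (fun y : ℝ => (y + 1) * Real.log y)
        (1 * Real.log x + (x + 1) * x⁻¹) x :=
      (((hasDerivAt_id x).add_const 1)).mul (Real.hasDerivAt_log hx0.ne')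
    have h2 : HasDerivAt (fun y : ℝ => 2 * (y - 1)) 2 x := by
      simpa using ((hasDerivAt_id x).sub_const 1).const_mul 2
    have := h1.sub h2
    exact this.congr_deriv (by ring)
  have hcont : ContinuousOn f (Set.Ici 1) := by
    apply ContinuousOn.sub
    · exact (continuousOn_id.add continuousOn_const).mul
        (Real.continuousOn_log.mono (by intro x hx; simp at hx ⊢; linarith))
    · fun_prop
  have hmono : MonotoneOn f (Set.Ici 1) := by
    apply monotoneOn_of_deriv_nonneg (convex_Ici 1) hcont
    · rw [interior_Ici]
      intro x hx
      exact (hd x hx).differentiableAt.differentiableWithinAt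
    · rw [interior_Ici]
      intro x hx
      rw [(hd x hx).deriv]
      have hx0 : (0:ℝ) < x := lt_trans one_pos hx
      have h3 : Real.log x⁻¹ ≤ x⁻¹ - 1 := Real.log_le_sub_one_of_pos (by positivity)
      rw [Real.log_inv] at h3
      have hxx : (x + 1) / x = 1 + 1/x := by field_simp
      rw [hxx, one_div]
      linarith
  have := hmono (Set.self_mem_Ici) hr hr
  simp only [hf] at this
  simp at this
  linarith

lemma logMean_le_add_div_two {x y : ℝ} (hx : 0 < x) (hy : 0 < y) :
    logMean x y ≤ (x + y) / 2 := by
  -- WLOG x ≤ y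
  have main : ∀ a b : ℝ, 0 < a → 0 < b → a ≤ b → logMean a b ≤ (a + b) / 2 := by
    intro a b ha hb hab
    rcases eq_or_lt_of_le hab with h | h
    · subst h; unfold logMean; simp
    · unfold logMean
      rw [if_neg h.ne]
      have hlog : Real.log a < Real.log b := Real.log_lt_log ha h
      rw [← neg_div_neg_eq, neg_sub, neg_sub]
      rw [div_le_iff₀ (by linarith)]
      have hr : 1 ≤ b / a := (one_le_div ha).2 hab
      have := key_log_ineq hr
      rw [Real.log_div hb.ne' ha.ne'] at this
      have h2 : 2 * (b/a - 1) * a ≤ (b/a + 1) * (Real.log b - Real.log a) * a :=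
        mul_le_mul_of_nonneg_right this ha.le
      have e1 : 2 * (b/a - 1) * a = 2 * (b - a) := by field_simp
      have e2 : (b/a + 1) * (Real.log b - Real.log a) * a
          = (a + b) * (Real.log b - Real.log a) := by field_simp; ring_nf
      rw [div_mul_eq_mul_div, le_div_iff₀ (by norm_num : (0:ℝ) < 2)]
      linarith
  rcases le_total x y with h | h
  · exact main x y hx hy h
  · rw [logMean_comm]
    have := main y x hy hx h
    linarith [this]

lemma min_le_logMean {x y : ℝ} (hx : 0 < x) (hy : 0 < y) : min x y ≤ logMean x y := by
  have main : ∀ a b : ℝ, 0 < a → 0 < b → a ≤ b → a ≤ logMean a b := by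
    intro a b ha hb hab
    rcases eq_or_lt_of_le hab with h | h
    · subst h; unfold logMean; simp
    · unfold logMean
      rw [if_neg h.ne]
      have hlog : Real.log a < Real.log b := Real.log_lt_log ha h
      rw [← neg_div_neg_eq, neg_sub, neg_sub, le_div_iff₀ (by linarith)]
      have h3 : Real.log (b/a) ≤ b/a - 1 := Real.log_le_sub_one_of_pos (by positivity)
      rw [Real.log_div hb.ne' ha.ne'] at h3
      have := mul_le_mul_of_nonneg_left h3 ha.le
      calc a * (Real.log b - Real.log a) ≤ a * (b/a - 1) := this
        _ = b - a := by field_simp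
  rcases le_total x y with h | h
  · rw [min_eq_left h]; exact main x y hx hy h
  · rw [min_eq_right h, logMean_comm]; exact main y x hy hx h

lemma logMean_le_max {x y : ℝ} (hx : 0 < x) (hy : 0 < y) : logMean x y ≤ max x y := by
  have main : ∀ a b : ℝ, 0 < a → 0 < b → a ≤ b → logMean a b ≤ b := by
    intro a b ha hb hab
    rcases eq_or_lt_of_le hab with h | h
    · subst h; unfold logMean; simp
    · unfold logMean
      rw [if_neg h.ne]
      have hlog : Real.log a < Real.log b := Real.log_lt_log ha h
      rw [← neg_div_neg_eq, neg_sub, neg_sub, div_le_iff₀ (by linarith)]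
      have h3 : Real.log (a/b) ≤ a/b - 1 := Real.log_le_sub_one_of_pos (by positivity)
      rw [Real.log_div ha.ne' hb.ne'] at h3
      have := mul_le_mul_of_nonneg_left h3 hb.le
      have h4 : b * (a/b - 1) = a - b := by field_simp
      nlinarith
  rcases le_total x y with h | h
  · rw [max_eq_right h]; exact main x y hx hy h
  · rw [max_eq_left h, logMean_comm]; exact main y x hy hx h

lemma continuousAt_logMean {x y : ℝ} (hx : 0 < x) (hy : 0 < y) :
    ContinuousAt (fun q : ℝ × ℝ => logMean q.1 q.2) (x, y) := by
  rcases eq_or_ne x y with rfl | hne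
  · -- diagonal case: squeeze between min and max
    have hx0 : logMean x x = x := by unfold logMean; simp
    rw [ContinuousAt]
    simp only [hx0]
    have hmin : Filter.Tendsto (fun q : ℝ × ℝ => min q.1 q.2) (nhds (x, x)) (nhds x) := by
      have : Continuous (fun q : ℝ × ℝ => min q.1 q.2) := continuous_fst.min continuous_snd
      simpa using this.tendsto (x, x)
    have hmax : Filter.Tendsto (fun q : ℝ × ℝ => max q.1 q.2) (nhds (x, x)) (nhds x) := by
      have : Continuous (fun q : ℝ × ℝ => max q.1 q.2) := continuous_fst.max continuous_snd
      simpa using this.tendsto (x, x)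
    have hV : ∀ᶠ q : ℝ × ℝ in nhds (x, x), 0 < q.1 ∧ 0 < q.2 := by
      have hopen : IsOpen {q : ℝ × ℝ | 0 < q.1 ∧ 0 < q.2} :=
        (isOpen_lt continuous_const continuous_fst).inter
          (isOpen_lt continuous_const continuous_snd)
      exact hopen.mem_nhds ⟨hx, hx⟩
    refine tendsto_of_tendsto_of_tendsto_of_le_of_le' hmin hmax ?_ ?_
    · exact hV.mono fun q hq => min_le_logMean hq.1 hq.2
    · exact hV.mono fun q hq => logMean_le_max hq.1 hq.2
  · -- off-diagonal case
    have hlogne : Real.log x ≠ Real.log y := by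
      intro h
      exact hne (Real.log_injOn_pos (Set.mem_Ioi.2 hx) (Set.mem_Ioi.2 hy) h)
    have hg : ContinuousAt (fun q : ℝ × ℝ => (q.1 - q.2) / (Real.log q.1 - Real.log q.2))
        (x, y) := by
      apply ContinuousAt.div
      · exact (continuous_fst.sub continuous_snd).continuousAt
      · exact ((Real.continuousAt_log hx.ne').comp continuous_fst.continuousAt).sub
          ((continuous_snd.continuousAt (x := (x, y))).log hy.ne')
      · simpa using sub_ne_zero.2 hlogne
    apply hg.congr
    have hU : IsOpen {q : ℝ × ℝ | q.1 ≠ q.2} :=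
      (isClosed_eq continuous_fst continuous_snd).isOpen_compl
    filter_upwards [hU.mem_nhds (by simpa using hne)] with q hq
    unfold logMean
    rw [if_neg hq]

lemma swap_double_sum {N : ℕ} (F : Fin N → Fin N → ℝ) :
    ∑ n, ∑ m, F n m = ∑ n, ∑ m, F m n := Finset.sum_comm

lemma sym_identity {N : ℕ} (W : Fin N → Fin N → ℝ) (hW : ∀ n m, W n m = W m n)
    (a b : Fin N → ℝ) :
    ∑ n, ∑ m, W n m * (a n - a m) * (b n - b m)
      = 2 * ∑ n, ∑ m, W n m * a n * (b n - b m) := by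
  have hswap : ∑ n, ∑ m, W n m * a m * (b n - b m)
      = - ∑ n, ∑ m, W n m * a n * (b n - b m) := by
    rw [swap_double_sum (fun n m => W n m * a m * (b n - b m))]
    rw [← Finset.sum_neg_distrib]
    apply Finset.sum_congr rfl
    intro n _
    rw [← Finset.sum_neg_distrib]
    apply Finset.sum_congr rfl
    intro m _
    rw [hW m n]; ring
  have hsplit : ∑ n, ∑ m, W n m * (a n - a m) * (b n - b m)
      = (∑ n, ∑ m, W n m * a n * (b n - b m))
        - ∑ n, ∑ m, W n m * a m * (b n - b m) := by
    rw [← Finset.sum_sub_distrib]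
    apply Finset.sum_congr rfl
    intro n _
    rw [← Finset.sum_sub_distrib]
    apply Finset.sum_congr rfl
    intro m _
    ring
  rw [hsplit, hswap]; ring

lemma cs_double_sum {N : ℕ} (W : Fin N → Fin N → ℝ) (hW : ∀ n m, 0 ≤ W n m)
    (a b : Fin N → ℝ) :
    (∑ n, ∑ m, W n m * (a n - a m) * (b n - b m))^2
      ≤ (∑ n, ∑ m, W n m * (a n - a m)^2) * (∑ n, ∑ m, W n m * (b n - b m)^2) := by
  rw [← Finset.sum_product' Finset.univ Finset.univ
        (fun n m => W n m * (a n - a m) * (b n - b m)),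
      ← Finset.sum_product' Finset.univ Finset.univ (fun n m => W n m * (a n - a m)^2),
      ← Finset.sum_product' Finset.univ Finset.univ (fun n m => W n m * (b n - b m)^2)]
  set f : Fin N × Fin N → ℝ := fun q => Real.sqrt (W q.1 q.2) * (a q.1 - a q.2) with hf
  set g : Fin N × Fin N → ℝ := fun q => Real.sqrt (W q.1 q.2) * (b q.1 - b q.2) with hg
  have h1 : ∀ q : Fin N × Fin N, W q.1 q.2 * (a q.1 - a q.2) * (b q.1 - b q.2) = f q * g q := by
    intro q
    simp only [hf, hg]
    rw [show Real.sqrt (W q.1 q.2) * (a q.1 - a q.2) * (Real.sqrt (W q.1 q.2) * (b q.1 - b q.2))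
        = (Real.sqrt (W q.1 q.2) * Real.sqrt (W q.1 q.2)) * ((a q.1 - a q.2) * (b q.1 - b q.2))
      from by ring, Real.mul_self_sqrt (hW _ _)]
    ring
  have h2 : ∀ q : Fin N × Fin N, W q.1 q.2 * (a q.1 - a q.2)^2 = f q ^ 2 := by
    intro q
    simp only [hf, mul_pow, Real.sq_sqrt (hW _ _)]
  have h3 : ∀ q : Fin N × Fin N, W q.1 q.2 * (b q.1 - b q.2)^2 = g q ^ 2 := by
    intro q
    simp only [hg, mul_pow, Real.sq_sqrt (hW _ _)]
  simp only [h1, h2, h3]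
  exact Finset.sum_mul_sq_le_sq_mul_sq _ f g

lemma amgm_param {x y l : ℝ} (hx : 0 ≤ x) (hy : 0 ≤ y) (hl : 0 < l) :
    2 * (Real.sqrt x * Real.sqrt y) ≤ l * x + y / l := by
  have h1 : Real.sqrt (l*x) * Real.sqrt (y/l) = Real.sqrt x * Real.sqrt y := by
    rw [← Real.sqrt_mul (by positivity), ← Real.sqrt_mul hx]
    congr 1
    field_simp
  have h2 := two_mul_le_add_sq (Real.sqrt (l*x)) (Real.sqrt (y/l))
  rw [Real.sq_sqrt (by positivity), Real.sq_sqrt (by positivity)] at h2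
  calc 2 * (Real.sqrt x * Real.sqrt y) = 2 * Real.sqrt (l*x) * Real.sqrt (y/l) := by
        rw [mul_assoc, h1]
    _ ≤ l * x + y / l := h2

lemma Kop_eq_sum_univ {N : ℕ} (R : Matrix (Fin N) (Fin N) ℝ) (peq p u : Fin N → ℝ)
    (n : Fin N) :
    Kop R peq p u n = ∑ m, (if m = n then 0
      else R n m * peq m * logMean (p n / peq n) (p m / peq m)) * (u n - u m) := by
  unfold Kop
  rw [show (∑ m ∈ Finset.univ.filter (· ≠ n),
        R n m * peq m * logMean (p n / peq n) (p m / peq m) * (u n - u m))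
      = ∑ m ∈ Finset.univ.filter (· ≠ n), (if m = n then 0
        else R n m * peq m * logMean (p n / peq n) (p m / peq m)) * (u n - u m) from
    Finset.sum_congr rfl fun m hm => by
      rw [if_neg (Finset.mem_filter.1 hm).2]]
  apply Finset.sum_subset (Finset.filter_subset _ _)
  intro m _ hm
  have : m = n := by
    by_contra h
    exact hm (Finset.mem_filter.2 ⟨Finset.mem_univ _, h⟩)
  rw [if_pos this]
  ring

lemma sum_swap_pairs {N : ℕ} (par : Fin N → ℤ) (F : Fin N → Fin N → ℝ) :
    ∑ q ∈ Finset.univ.filter (fun q : Fin N × Fin N => q.1 ≠ q.2 ∧ par q.1 ≠ par q.2),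
      F q.1 q.2
    = ∑ q ∈ Finset.univ.filter (fun q : Fin N × Fin N => q.1 ≠ q.2 ∧ par q.1 ≠ par q.2),
      F q.2 q.1 := by
  apply Finset.sum_nbij' (i := Prod.swap) (j := Prod.swap)
  · intro q hq
    simp only [Finset.mem_filter, Finset.mem_univ, true_and] at hq ⊢
    exact ⟨hq.1.symm, hq.2.symm⟩
  · intro q hq
    simp only [Finset.mem_filter, Finset.mem_univ, true_and] at hq ⊢
    exact ⟨hq.1.symm, hq.2.symm⟩
  · intro q _; rfl
  · intro q _; rfl
  · intro q _; rfl

lemma sq_le_of_forall_le {a c I : ℝ} (ha : 0 ≤ a) (hc : 0 ≤ c) (hI : 0 ≤ I)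
    (h : ∀ l : ℝ, 0 < l → 2 * I ≤ l * a + c / l) : I ^ 2 ≤ a * c := by
  have hq : ∀ x : ℝ, 0 ≤ a * (x * x) + (-(2 * I)) * x + c := by
    intro x
    rcases le_or_gt x 0 with hx | hx
    · nlinarith
    · have h1 := h x hx
      have hcx : c / x * x = c := div_mul_cancel₀ c hx.ne'
      nlinarith [mul_le_mul_of_nonneg_right h1 hx.le]
  have hd := discrim_le_zero hq
  unfold discrim at hd
  nlinarith [hd]

/-- Tighter classical speed limit: the squared total variation distance is bounded by twice
the time-integrated *partial* dynamical activity (restricted to pairs of opposite parity)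
times the total entropy production `∫₀^τ ⟨v, K_p v⟩ dt`. -/
theorem total_variation_sq_le_two_mul_partial_activity_mul_entropy (N : ℕ) (hN : 1 ≤ N)
    (τ : ℝ) (hτ : 0 < τ)
    (R : ℝ → Matrix (Fin N) (Fin N) ℝ) (hRcont : ∀ m n : Fin N, Continuous fun t => R t m n)
    (hR : ∀ t ∈ Set.Icc (0:ℝ) τ, ∀ m n : Fin N, m ≠ n → 0 ≤ R t m n)
    (peq : ℝ → Fin N → ℝ) (hpeqcont : ∀ n : Fin N, Continuous fun t => peq t n)
    (hpeq : ∀ t ∈ Set.Icc (0:ℝ) τ, ∀ n, 0 < peq t n)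
    (hdb : ∀ t ∈ Set.Icc (0:ℝ) τ, ∀ n m : Fin N, R t n m * peq t m = R t m n * peq t n)
    (p : ℝ → Fin N → ℝ) (hp : ∀ t ∈ Set.Icc (0:ℝ) τ, ∀ n, 0 < p t n)
    (v : ℝ → Fin N → ℝ) (hvcont : ∀ n : Fin N, Continuous fun t => v t n)
    (hderiv : ∀ t ∈ Set.Icc (0:ℝ) τ, ∀ n : Fin N,
      HasDerivAt (fun s => p s n) (Kop (R t) (peq t) (p t) (v t) n) t)
    (par : Fin N → ℤ)
    (hpar : ∀ n, par n = if p τ n ≤ p 0 n then 1 else -1) :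
    (∑ n, |p τ n - p 0 n|)^2
      ≤ 2 * (∫ t in (0:ℝ)..τ, ∑ nm ∈ Finset.univ.filter
              (fun nm : Fin N × Fin N => nm.1 ≠ nm.2 ∧ par nm.1 ≠ par nm.2),
              R t nm.2 nm.1 * p t nm.1)
          * (∫ t in (0:ℝ)..τ, ∑ n, v t n * Kop (R t) (peq t) (p t) (v t) n) := by
  have hIcc : Set.uIcc (0:ℝ) τ = Set.Icc 0 τ := Set.uIcc_of_le hτ.le
  set c : Fin N → ℝ := fun n => (par n : ℝ) with hcdef
  set W : ℝ → Fin N → Fin N → ℝ := fun t n m => if m = n then 0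
    else R t n m * peq t m * logMean (p t n / peq t n) (p t m / peq t m) with hWdef
  set S : Finset (Fin N × Fin N) := Finset.univ.filter
    (fun nm : Fin N × Fin N => nm.1 ≠ nm.2 ∧ par nm.1 ≠ par nm.2) with hSdef
  -- basic properties of W
  have hKop : ∀ t (u : Fin N → ℝ) n,
      Kop (R t) (peq t) (p t) u n = ∑ m, W t n m * (u n - u m) :=
    fun t u n => Kop_eq_sum_univ (R t) (peq t) (p t) u n
  have hWnonneg : ∀ t ∈ Set.Icc (0:ℝ) τ, ∀ n m, 0 ≤ W t n m := by
    intro t ht n m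
    simp only [hWdef]
    rcases eq_or_ne m n with h | h
    · rw [if_pos h]
    · rw [if_neg h]
      have h1 := logMean_pos (div_pos (hp t ht n) (hpeq t ht n))
        (div_pos (hp t ht m) (hpeq t ht m))
      have hRnm := hR t ht n m (fun hh => h hh.symm)
      exact mul_nonneg (mul_nonneg hRnm (hpeq t ht m).le) h1.le
  have hWsymm : ∀ t ∈ Set.Icc (0:ℝ) τ, ∀ n m, W t n m = W t m n := by
    intro t ht n m
    simp only [hWdef]
    rcases eq_or_ne m n with h | h
    · rw [if_pos h, if_pos h.symm]
    · rw [if_neg h, if_neg h.symm, hdb t ht n m, logMean_comm]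
  have hWle : ∀ t ∈ Set.Icc (0:ℝ) τ, ∀ n m, n ≠ m →
      W t n m ≤ (R t m n * p t n + R t n m * p t m) / 2 := by
    intro t ht n m hnm
    simp only [hWdef]
    rw [if_neg (fun h => hnm h.symm)]
    have hRP : 0 ≤ R t n m * peq t m :=
      mul_nonneg (hR t ht n m hnm) (hpeq t ht m).le
    have hbd := logMean_le_add_div_two (div_pos (hp t ht n) (hpeq t ht n))
      (div_pos (hp t ht m) (hpeq t ht m))
    have hpn : peq t n ≠ 0 := (hpeq t ht n).ne'
    have hpm : peq t m ≠ 0 := (hpeq t ht m).ne'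
    have e1 : R t n m * peq t m * (p t n / peq t n) = R t m n * p t n := by
      rw [hdb t ht n m]
      field_simp
    have e2 : R t n m * peq t m * (p t m / peq t m) = R t n m * p t m := by
      field_simp
    calc R t n m * peq t m * logMean (p t n / peq t n) (p t m / peq t m)
        ≤ R t n m * peq t m * ((p t n / peq t n + p t m / peq t m) / 2) :=
          mul_le_mul_of_nonneg_left hbd hRP
      _ = (R t n m * peq t m * (p t n / peq t n)
            + R t n m * peq t m * (p t m / peq t m)) / 2 := by ring
      _ = (R t m n * p t n + R t n m * p t m) / 2 := by rw [e1, e2]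
  -- bilinear form identity
  have hB : ∀ t (a u : Fin N → ℝ),
      ∑ n, a n * Kop (R t) (peq t) (p t) u n = ∑ n, ∑ m, W t n m * a n * (u n - u m) := by
    intro t a u
    apply Finset.sum_congr rfl
    intro n _
    rw [hKop t u n, Finset.mul_sum]
    apply Finset.sum_congr rfl
    intro m _
    ring
  -- continuity facts
  have hpc : ∀ t ∈ Set.Icc (0:ℝ) τ, ∀ n, ContinuousAt (fun s => p s n) t :=
    fun t ht n => (hderiv t ht n).continuousAt
  have hlmc : ∀ n m : Fin N, ContinuousOn
      (fun t => logMean (p t n / peq t n) (p t m / peq t m)) (Set.Icc 0 τ) := by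
    intro n m t ht
    apply ContinuousAt.continuousWithinAt
    have h1 : ContinuousAt (fun t => (p t n / peq t n, p t m / peq t m)) t :=
      ((hpc t ht n).div ((hpeqcont n).continuousAt) (hpeq t ht n).ne').prodMk
        ((hpc t ht m).div ((hpeqcont m).continuousAt) (hpeq t ht m).ne')
    have h2 : ContinuousAt ((fun q : ℝ × ℝ => logMean q.1 q.2)
        ∘ (fun t => (p t n / peq t n, p t m / peq t m))) t :=
      ContinuousAt.comp (continuousAt_logMean (div_pos (hp t ht n) (hpeq t ht n))
        (div_pos (hp t ht m) (hpeq t ht m))) h1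
    exact h2
  have hDc : ∀ n : Fin N, ContinuousOn
      (fun t => Kop (R t) (peq t) (p t) (v t) n) (Set.Icc 0 τ) := by
    intro n
    have : (fun t => Kop (R t) (peq t) (p t) (v t) n)
        = fun t => ∑ m ∈ Finset.univ.filter (· ≠ n),
          R t n m * peq t m * logMean (p t n / peq t n) (p t m / peq t m)
            * (v t n - v t m) := by
      funext t
      rfl
    rw [this]
    apply continuousOn_finset_sum
    intro m _
    exact (((hRcont n m).continuousOn.mul (hpeqcont m).continuousOn).mul (hlmc n m)).mul
      (((hvcont n).sub (hvcont m)).continuousOn)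
  have hInt : ∀ n : Fin N, IntervalIntegrable
      (fun t => Kop (R t) (peq t) (p t) (v t) n) MeasureTheory.volume 0 τ :=
    fun n => ContinuousOn.intervalIntegrable (by rw [hIcc]; exact hDc n)
  have hFTC : ∀ n : Fin N,
      (∫ t in (0:ℝ)..τ, Kop (R t) (peq t) (p t) (v t) n) = p τ n - p 0 n :=
    fun n => intervalIntegral.integral_eq_sub_of_hasDerivAt
      (fun t ht => hderiv t (hIcc ▸ ht) n) (hInt n)
  have hgc : ContinuousOn (fun t => ∑ n, c n * Kop (R t) (peq t) (p t) (v t) n)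
      (Set.Icc 0 τ) :=
    continuousOn_finset_sum _ fun n _ => continuousOn_const.mul (hDc n)
  have hEc : ContinuousOn (fun t => ∑ n, v t n * Kop (R t) (peq t) (p t) (v t) n)
      (Set.Icc 0 τ) :=
    continuousOn_finset_sum _ fun n _ => (hvcont n).continuousOn.mul (hDc n)
  have hAc : ContinuousOn (fun t => ∑ nm ∈ S, R t nm.2 nm.1 * p t nm.1) (Set.Icc 0 τ) :=
    continuousOn_finset_sum _ fun nm _ => (hRcont nm.2 nm.1).continuousOn.mul
      (fun t ht => (hpc t ht nm.1).continuousWithinAt)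
  have hgInt : IntervalIntegrable (fun t => ∑ n, c n * Kop (R t) (peq t) (p t) (v t) n)
      MeasureTheory.volume 0 τ := ContinuousOn.intervalIntegrable (by rw [hIcc]; exact hgc)
  have hEInt : IntervalIntegrable (fun t => ∑ n, v t n * Kop (R t) (peq t) (p t) (v t) n)
      MeasureTheory.volume 0 τ := ContinuousOn.intervalIntegrable (by rw [hIcc]; exact hEc)
  have hAInt : IntervalIntegrable (fun t => ∑ nm ∈ S, R t nm.2 nm.1 * p t nm.1)
      MeasureTheory.volume 0 τ := ContinuousOn.intervalIntegrable (by rw [hIcc]; exact hAc)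
  -- nonnegativity of the quadratic form in v
  have hQFvv : ∀ t ∈ Set.Icc (0:ℝ) τ, 0 ≤ ∑ n, ∑ m, W t n m * (v t n - v t m)^2 :=
    fun t ht => Finset.sum_nonneg fun n _ => Finset.sum_nonneg fun m _ =>
      mul_nonneg (hWnonneg t ht n m) (sq_nonneg _)
  have hE2 : ∀ t ∈ Set.Icc (0:ℝ) τ,
      ∑ n, ∑ m, W t n m * (v t n - v t m)^2
        = 2 * ∑ n, v t n * Kop (R t) (peq t) (p t) (v t) n := by
    intro t ht
    have h1 := sym_identity (W t) (hWsymm t ht) (v t) (v t)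
    have e : ∑ n, ∑ m, W t n m * (v t n - v t m)^2
        = ∑ n, ∑ m, W t n m * (v t n - v t m) * (v t n - v t m) :=
      Finset.sum_congr rfl fun n _ => Finset.sum_congr rfl fun m _ => by ring
    rw [e, h1, hB t (v t) (v t)]
  have hE0 : ∀ t ∈ Set.Icc (0:ℝ) τ,
      0 ≤ ∑ n, v t n * Kop (R t) (peq t) (p t) (v t) n := by
    intro t ht
    have := hQFvv t ht
    rw [hE2 t ht] at this
    linarith
  have hA0 : ∀ t ∈ Set.Icc (0:ℝ) τ, 0 ≤ ∑ nm ∈ S, R t nm.2 nm.1 * p t nm.1 := by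
    intro t ht
    apply Finset.sum_nonneg
    intro q hq
    simp only [hSdef, Finset.mem_filter, Finset.mem_univ, true_and] at hq
    exact mul_nonneg (hR t ht q.2 q.1 (fun h => hq.1 h.symm)) (hp t ht q.1).le
  -- the quadratic form in c is bounded by 4 × partial activity
  have hqcc : ∀ t ∈ Set.Icc (0:ℝ) τ,
      ∑ n, ∑ m, W t n m * (c n - c m)^2
        ≤ 4 * ∑ nm ∈ S, R t nm.2 nm.1 * p t nm.1 := by
    intro t ht
    have hstep1 : ∑ n, ∑ m, W t n m * (c n - c m)^2
        = ∑ q ∈ S, W t q.1 q.2 * (c q.1 - c q.2)^2 := by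
      rw [← Finset.sum_product' Finset.univ Finset.univ
            (fun n m => W t n m * (c n - c m)^2)]
      symm
      rw [hSdef]
      apply Finset.sum_subset (Finset.filter_subset _ _)
      intro q _ hqs
      simp only [Finset.mem_filter, Finset.mem_univ, true_and, not_and, not_not] at hqs
      have hpq : par q.1 = par q.2 := by
        by_cases h : q.1 = q.2
        · rw [h]
        · exact hqs h
      have hcq : c q.1 = c q.2 := by simp [hcdef, hpq]
      rw [hcq, sub_self]
      ring
    have hstep2 : ∀ q ∈ S, (c q.1 - c q.2)^2 = 4 := by
      intro q hq
      simp only [hSdef, Finset.mem_filter, Finset.mem_univ, true_and] at hq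
      have ha : par q.1 = 1 ∨ par q.1 = -1 := by rw [hpar q.1]; split_ifs <;> simp
      have hb : par q.2 = 1 ∨ par q.2 = -1 := by rw [hpar q.2]; split_ifs <;> simp
      rcases ha with ha | ha <;> rcases hb with hb | hb <;>
        first
          | exact absurd (ha.trans hb.symm) hq.2
          | (simp [hcdef, ha, hb]; norm_num)
    rw [hstep1]
    have hmem : ∀ q ∈ S, q.1 ≠ q.2 := by
      intro q hq
      simp only [hSdef, Finset.mem_filter, Finset.mem_univ, true_and] at hq
      exact hq.1
    calc ∑ q ∈ S, W t q.1 q.2 * (c q.1 - c q.2)^2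
        = ∑ q ∈ S, 4 * W t q.1 q.2 := by
          apply Finset.sum_congr rfl
          intro q hq
          rw [hstep2 q hq]
          ring
      _ ≤ ∑ q ∈ S, (2 * (R t q.2 q.1 * p t q.1) + 2 * (R t q.1 q.2 * p t q.2)) := by
          apply Finset.sum_le_sum
          intro q hq
          have := hWle t ht q.1 q.2 (hmem q hq)
          linarith
      _ = 2 * ∑ q ∈ S, R t q.2 q.1 * p t q.1 + 2 * ∑ q ∈ S, R t q.1 q.2 * p t q.2 := by
          rw [Finset.sum_add_distrib, ← Finset.mul_sum, ← Finset.mul_sum]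
      _ = 4 * ∑ q ∈ S, R t q.2 q.1 * p t q.1 := by
          have hsw := sum_swap_pairs par (fun n m => R t n m * p t m)
          linarith
  -- pointwise Cauchy–Schwarz bound
  have hgsq : ∀ t ∈ Set.Icc (0:ℝ) τ,
      (∑ n, c n * Kop (R t) (peq t) (p t) (v t) n)^2
        ≤ (2 * ∑ nm ∈ S, R t nm.2 nm.1 * p t nm.1)
          * (∑ n, v t n * Kop (R t) (peq t) (p t) (v t) n) := by
    intro t ht
    have hBg := hB t c (v t)
    have hsymC := sym_identity (W t) (hWsymm t ht) c (v t)
    have hcs := cs_double_sum (W t) (hWnonneg t ht) c (v t)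
    have hqvv := hQFvv t ht
    have hqc := hqcc t ht
    have hE2' := hE2 t ht
    have hkey : (∑ n, ∑ m, W t n m * (c n - c m)^2)
        * (∑ n, ∑ m, W t n m * (v t n - v t m)^2)
        ≤ (4 * ∑ nm ∈ S, R t nm.2 nm.1 * p t nm.1)
          * (∑ n, ∑ m, W t n m * (v t n - v t m)^2) :=
      mul_le_mul_of_nonneg_right hqc hqvv
    have h1 : (2 * ∑ n, c n * Kop (R t) (peq t) (p t) (v t) n)^2
        ≤ (4 * ∑ nm ∈ S, R t nm.2 nm.1 * p t nm.1)
          * (2 * ∑ n, v t n * Kop (R t) (peq t) (p t) (v t) n) := by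
      calc (2 * ∑ n, c n * Kop (R t) (peq t) (p t) (v t) n)^2
          = (∑ n, ∑ m, W t n m * (c n - c m) * (v t n - v t m))^2 := by rw [hBg, hsymC]
        _ ≤ (∑ n, ∑ m, W t n m * (c n - c m)^2)
              * (∑ n, ∑ m, W t n m * (v t n - v t m)^2) := hcs
        _ ≤ (4 * ∑ nm ∈ S, R t nm.2 nm.1 * p t nm.1)
              * (∑ n, ∑ m, W t n m * (v t n - v t m)^2) := hkey
        _ = (4 * ∑ nm ∈ S, R t nm.2 nm.1 * p t nm.1)
              * (2 * ∑ n, v t n * Kop (R t) (peq t) (p t) (v t) n) := by rw [hE2']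
    nlinarith [h1]
  -- total variation as an integral
  have hS : (∑ n, |p τ n - p 0 n|)
      = - ∫ t in (0:ℝ)..τ, ∑ n, c n * Kop (R t) (peq t) (p t) (v t) n := by
    rw [intervalIntegral.integral_finset_sum (fun n _ => (hInt n).const_mul (c n))]
    simp only [intervalIntegral.integral_const_mul, hFTC]
    rw [← Finset.sum_neg_distrib]
    apply Finset.sum_congr rfl
    intro n _
    have hn := hpar n
    by_cases h : p τ n ≤ p 0 n
    · rw [if_pos h] at hn
      have hcn : c n = 1 := by simp [hcdef, hn]
      rw [hcn, abs_of_nonpos (by linarith : p τ n - p 0 n ≤ 0)]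
      ring
    · rw [if_neg h] at hn
      push_neg at h
      have hcn : c n = -1 := by simp [hcdef, hn]
      rw [hcn, abs_of_nonneg (by linarith : (0:ℝ) ≤ p τ n - p 0 n)]
      ring
  have hIA0 : 0 ≤ ∫ t in (0:ℝ)..τ, ∑ nm ∈ S, R t nm.2 nm.1 * p t nm.1 :=
    intervalIntegral.integral_nonneg hτ.le (fun u hu => hA0 u hu)
  have hIE0 : 0 ≤ ∫ t in (0:ℝ)..τ, ∑ n, v t n * Kop (R t) (peq t) (p t) (v t) n :=
    intervalIntegral.integral_nonneg hτ.le (fun u hu => hE0 u hu)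
  have habsInt : IntervalIntegrable
      (fun t => |∑ n, c n * Kop (R t) (peq t) (p t) (v t) n|)
      MeasureTheory.volume 0 τ := hgInt.abs
  have hIg0 : 0 ≤ ∫ t in (0:ℝ)..τ, |∑ n, c n * Kop (R t) (peq t) (p t) (v t) n| :=
    intervalIntegral.integral_nonneg hτ.le (fun u _ => abs_nonneg _)
  have hkeyl : ∀ l : ℝ, 0 < l →
      2 * (∫ t in (0:ℝ)..τ, |∑ n, c n * Kop (R t) (peq t) (p t) (v t) n|)
        ≤ l * (2 * ∫ t in (0:ℝ)..τ, ∑ nm ∈ S, R t nm.2 nm.1 * p t nm.1)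
          + (∫ t in (0:ℝ)..τ, ∑ n, v t n * Kop (R t) (peq t) (p t) (v t) n) / l := by
    intro l hl
    have hpt : ∀ u ∈ Set.Icc (0:ℝ) τ,
        2 * |∑ n, c n * Kop (R u) (peq u) (p u) (v u) n|
          ≤ l * (2 * ∑ nm ∈ S, R u nm.2 nm.1 * p u nm.1)
            + (∑ n, v u n * Kop (R u) (peq u) (p u) (v u) n) / l := by
      intro u hu
      have hsq := hgsq u hu
      have h2A := hA0 u hu
      have hE := hE0 u hu
      have habs : |∑ n, c n * Kop (R u) (peq u) (p u) (v u) n|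
          ≤ Real.sqrt (2 * ∑ nm ∈ S, R u nm.2 nm.1 * p u nm.1)
            * Real.sqrt (∑ n, v u n * Kop (R u) (peq u) (p u) (v u) n) := by
        have h2 := Real.abs_le_sqrt hsq
        rwa [Real.sqrt_mul (by linarith)] at h2
      have h3 := amgm_param (x := 2 * ∑ nm ∈ S, R u nm.2 nm.1 * p u nm.1)
        (y := ∑ n, v u n * Kop (R u) (peq u) (p u) (v u) n) (by linarith) hE hl
      linarith
    have hmono := intervalIntegral.integral_mono_on hτ.le
      (habsInt.const_mul 2)
      (((hAInt.const_mul 2).const_mul l).add (hEInt.div_const l))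
      hpt
    rw [intervalIntegral.integral_const_mul,
      intervalIntegral.integral_add ((hAInt.const_mul 2).const_mul l) (hEInt.div_const l),
      intervalIntegral.integral_const_mul, intervalIntegral.integral_const_mul,
      intervalIntegral.integral_div] at hmono
    linarith
  have hfinal := sq_le_of_forall_le
    (a := 2 * ∫ t in (0:ℝ)..τ, ∑ nm ∈ S, R t nm.2 nm.1 * p t nm.1)
    (c := ∫ t in (0:ℝ)..τ, ∑ n, v t n * Kop (R t) (peq t) (p t) (v t) n)
    (I := ∫ t in (0:ℝ)..τ, |∑ n, c n * Kop (R t) (peq t) (p t) (v t) n|)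
    (by linarith) hIE0 hIg0 hkeyl
  have hSle : (∑ n, |p τ n - p 0 n|)
      ≤ ∫ t in (0:ℝ)..τ, |∑ n, c n * Kop (R t) (peq t) (p t) (v t) n| := by
    rw [hS]
    have h1 := intervalIntegral.abs_integral_le_integral_abs
      (f := fun t => ∑ n, c n * Kop (R t) (peq t) (p t) (v t) n)
      (μ := MeasureTheory.volume) hτ.le
    have h2 := neg_le_abs (∫ t in (0:ℝ)..τ, ∑ n, c n * Kop (R t) (peq t) (p t) (v t) n)
    linarith
  have hSnn : 0 ≤ ∑ n, |p τ n - p 0 n| := Finset.sum_nonneg fun n _ => abs_nonneg _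
  calc (∑ n, |p τ n - p 0 n|)^2
      ≤ (∫ t in (0:ℝ)..τ, |∑ n, c n * Kop (R t) (peq t) (p t) (v t) n|)^2 :=
        pow_le_pow_left₀ hSnn hSle 2
    _ ≤ (2 * ∫ t in (0:ℝ)..τ, ∑ nm ∈ S, R t nm.2 nm.1 * p t nm.1)
          * (∫ t in (0:ℝ)..τ, ∑ n, v t n * Kop (R t) (peq t) (p t) (v t) n) := hfinal
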